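/- Let B(z) = Σ_{n≥0} C_n z^{2n+1} be the generating function of rooted binary plane trees (C_n the n-th Catalan number), satisfying B(z) = z(1 + B(z)²). Then for every k ≥ 0, the generating function of binary trees with distance to the border at least k is B_k(z) = z^{2^k − 1}·B(z)^{2^k}, and for m large enough the coefficient of z^{2m+1} in B_k equals (2^k/(2m − 2^k + 2))·binom(2m − 2^k + 2, m − 2^k + 1). -/

import Mathlib

open PowerSeries Finset

/-- Number of positive lattice paths of length `N` from 0 to `j` (ballot-type numbers). -/
def stP : ℕ → ℕ → ℕ
  | 0, 0 => 1
  | 0, _ + 1 => 0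
  | _ + 1, 0 => 0
  | N + 1, j + 1 => stP N j + stP N (j + 2)

lemma stP_zero_right : ∀ N, 0 < N → stP N 0 = 0
  | _ + 1, _ => rfl

lemma stP_eq_zero_of_lt : ∀ N j, N < j → stP N j = 0
  | 0, _ + 1, _ => rfl
  | N + 1, j + 1, h => by
      rw [stP, stP_eq_zero_of_lt N j (by omega), stP_eq_zero_of_lt N (j + 2) (by omega)]

lemma stP_diag : ∀ N, stP N N = 1
  | 0 => rfl
  | N + 1 => by
      rw [stP, stP_diag N, stP_eq_zero_of_lt N (N + 2) (by omega)]

lemma stP_formula : ∀ N j : ℕ, j % 2 = N % 2 → j ≤ N →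
    (N : ℝ) * stP N j = j * (N.choose ((N - j) / 2)) := by
  intro N
  induction N with
  | zero => intro j hp hle; interval_cases j; simp
  | succ N ih =>
    intro j hp hle
    match j, hle with
    | 0, _ => simp [stP_zero_right (N + 1) (by omega)]
    | j + 1, hle =>
      rcases eq_or_lt_of_le hle with heq | hlt
      · rw [heq, stP_diag, Nat.sub_self]
        simp
      · -- j + 1 ≤ N - 1, so j + 2 ≤ N and j ≤ N, with parity j % 2 = N % 2
        have hj2 : j + 2 ≤ N := by omega
        have hpar : j % 2 = N % 2 := by omega
        obtain ⟨h', hh'⟩ : ∃ h', N = j + 2 * h' + 2 := ⟨(N - j - 2) / 2, by omega⟩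
        have ih1 := ih j hpar (by omega)
        have ih2 := ih (j + 2) (by omega) hj2
        have hidx1 : (N - j) / 2 = h' + 1 := by omega
        have hidx2 : (N - (j + 2)) / 2 = h' := by omega
        have hidx3 : (N + 1 - (j + 1)) / 2 = h' + 1 := by omega
        rw [hidx1] at ih1
        rw [hidx2] at ih2
        rw [hidx3]
        have hch : (N + 1).choose (h' + 1) = N.choose h' + N.choose (h' + 1) := by
          rw [Nat.choose_succ_succ']
        have hrat : (N.choose (h' + 1) : ℝ) * (h' + 1) = N.choose h' * (N - h' : ℕ) := by
          exact_mod_cast congrArg (Nat.cast : ℕ → ℝ) (Nat.choose_succ_right_eq N h')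
        have hcast : ((N - h' : ℕ) : ℝ) = (N : ℝ) - h' := by
          have : h' ≤ N := by omega
          push_cast [this]; ring
        rw [hcast] at hrat
        have hNe : (N : ℝ) = j + 2 * h' + 2 := by exact_mod_cast hh'
        have hN0 : (N : ℝ) ≠ 0 := by
          have : 0 < N := by omega
          positivity
        rw [stP, hch]
        push_cast at ih1 ih2 ⊢
        apply mul_left_cancel₀ hN0
        linear_combination ((N : ℝ) + 1) * ih1 + ((N : ℝ) + 1) * ih2 - 2 * hrat
          + (-(N.choose (h' + 1) : ℝ) - (N.choose h' : ℝ)) * hNe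

lemma stP_coeff (B : PowerSeries ℝ) (h1 : B = X * (1 + B ^ 2)) :
    ∀ N j : ℕ, PowerSeries.coeff N (B ^ j) = stP N j := by
  have h0 : constantCoeff B = 0 := by
    rw [h1]; simp
  intro N
  induction N with
  | zero =>
    intro j
    rw [coeff_zero_eq_constantCoeff, map_pow, h0]
    cases j with
    | zero => simp [stP]
    | succ j => simp [stP, zero_pow]
  | succ N ih =>
    intro j
    cases j with
    | zero => simp [stP, coeff_one]
    | succ j =>
      have hsplit : B ^ (j + 1) = X * B ^ j + X * B ^ (j + 2) := by
        calc B ^ (j + 1) = B * B ^ j := by ring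
          _ = (X * (1 + B ^ 2)) * B ^ j := by rw [← h1]
          _ = X * B ^ j + X * B ^ (j + 2) := by ring
      rw [hsplit, map_add, coeff_succ_X_mul, coeff_succ_X_mul, ih, ih, stP]
      push_cast
      ring

lemma catalan_gf_eq (B : PowerSeries ℝ)
    (hB : B = PowerSeries.mk fun n => if Odd n then (catalan ((n - 1) / 2) : ℝ) else 0) :
    B = PowerSeries.X * (1 + B ^ 2) := by
  have hc : ∀ n, PowerSeries.coeff n B
      = if Odd n then (catalan ((n - 1) / 2) : ℝ) else 0 := by
    intro n; rw [hB, coeff_mk]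
  ext n
  cases n with
  | zero =>
    rw [hc 0, if_neg (by decide)]
    simp
  | succ n =>
    rw [coeff_succ_X_mul, map_add, sq, coeff_mul]
    rcases Nat.even_or_odd n with ⟨t, ht⟩ | hodd
    · -- n = t + t even
      subst ht
      rcases Nat.eq_zero_or_pos t with rfl | hpos
      · simp [hc]
      · have hone : PowerSeries.coeff (t + t) (1 : PowerSeries ℝ) = 0 := by
          rw [coeff_one, if_neg (by omega)]
        have hL : PowerSeries.coeff (t + t + 1) B = (catalan t : ℝ) := by
          rw [hc, if_pos ⟨t, by ring⟩, show (t + t + 1 - 1) / 2 = t from by omega]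
        have key : ∑ p ∈ Finset.HasAntidiagonal.antidiagonal (t + t),
            (PowerSeries.coeff p.1 B) * (PowerSeries.coeff p.2 B) = (catalan t : ℝ) := by
          rw [Finset.Nat.sum_antidiagonal_eq_sum_range_succ_mk]
          have hinj : ∀ x ∈ Finset.range t, ∀ y ∈ Finset.range t,
              2 * x + 1 = 2 * y + 1 → x = y := by
            intro x _ y _ h; omega
          have hsub : (Finset.range t).image (fun a => 2 * a + 1) ⊆ Finset.range (t + t + 1) := by
            intro x hx
            simp only [Finset.mem_image, Finset.mem_range] at hx ⊢
            obtain ⟨a, ha, rfl⟩ := hx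
            omega
          have hvan : ∀ x ∈ Finset.range (t + t + 1),
              x ∉ (Finset.range t).image (fun a => 2 * a + 1) →
              (PowerSeries.coeff x B) * (PowerSeries.coeff (t + t - x) B) = 0 := by
            intro x hx hnx
            simp only [Finset.mem_image, Finset.mem_range] at hx hnx
            have hnodd : ¬ Odd x := by
              rintro ⟨v, hv⟩
              exact hnx ⟨v, by omega, by omega⟩
            rw [hc x, if_neg hnodd, zero_mul]
          rw [← Finset.sum_subset hsub hvan, Finset.sum_image hinj]
          have hterm : ∀ a ∈ Finset.range t,
              (PowerSeries.coeff (2 * a + 1) B) * (PowerSeries.coeff (t + t - (2 * a + 1)) B)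
                = (catalan a : ℝ) * (catalan (t - 1 - a) : ℝ) := by
            intro a ha
            rw [Finset.mem_range] at ha
            have e1 : t + t - (2 * a + 1) = 2 * (t - 1 - a) + 1 := by omega
            rw [hc, hc, e1, if_pos ⟨a, by ring⟩, if_pos ⟨t - 1 - a, by ring⟩,
              show (2 * a + 1 - 1) / 2 = a from by omega,
              show (2 * (t - 1 - a) + 1 - 1) / 2 = t - 1 - a from by omega]
          rw [Finset.sum_congr rfl hterm]
          have h5 := catalan_succ' (t - 1)
          rw [Finset.Nat.sum_antidiagonal_eq_sum_range_succ_mk] at h5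
          have ht1 : t - 1 + 1 = t := by omega
          have h5' : catalan t = ∑ x ∈ Finset.range t, catalan x * catalan (t - 1 - x) := by
            simpa [ht1] using h5
          exact_mod_cast (congrArg (Nat.cast : ℕ → ℝ) h5').symm
        rw [hone, zero_add, hL, key]
    · -- n odd
      have h1 : PowerSeries.coeff (n + 1) B = 0 := by
        rw [hc, if_neg (by rcases hodd with ⟨u, hu⟩; rintro ⟨w, hw⟩; omega)]
      have h2 : PowerSeries.coeff n (1 : PowerSeries ℝ) = 0 := by
        rw [coeff_one, if_neg (by rintro rfl; exact (by decide : ¬ Odd 0) hodd)]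
      rw [h1, h2, zero_add]
      symm
      apply Finset.sum_eq_zero
      intro p hp
      rw [Finset.HasAntidiagonal.mem_antidiagonal] at hp
      by_cases hp1 : Odd p.1
      · have hp2 : ¬ Odd p.2 := by
          rcases hodd with ⟨u, hu⟩; rcases hp1 with ⟨v, hv⟩
          rintro ⟨w, hw⟩; omega
        rw [hc p.2, if_neg hp2, mul_zero]
      · rw [hc p.1, if_neg hp1, zero_mul]

theorem stmt_18 (B : PowerSeries ℝ)
    (hB : B = PowerSeries.mk fun n => if Odd n then (catalan ((n - 1) / 2) : ℝ) else 0)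
    (Bk : ℕ → PowerSeries ℝ)
    (hBk0 : Bk 0 = B)
    (hBkrec : ∀ k, Bk (k + 1) = PowerSeries.X * (Bk k) ^ 2) :
    B = PowerSeries.X * (1 + B ^ 2) ∧
    (∀ k : ℕ, Bk k = PowerSeries.X ^ (2 ^ k - 1) * B ^ (2 ^ k)) ∧
    (∀ k : ℕ, ∃ M : ℕ, ∀ m : ℕ, M ≤ m →
      PowerSeries.coeff (2 * m + 1) (Bk k) =
        ((2 ^ k : ℝ) / ((2 * m + 2 - 2 ^ k : ℕ) : ℝ)) *
          ((2 * m + 2 - 2 ^ k).choose (m + 1 - 2 ^ k) : ℝ)) := by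
  have h1 : B = PowerSeries.X * (1 + B ^ 2) := catalan_gf_eq B hB
  have h2 : ∀ k : ℕ, Bk k = PowerSeries.X ^ (2 ^ k - 1) * B ^ (2 ^ k) := by
    intro k
    induction k with
    | zero => simpa using hBk0
    | succ k ih =>
      have hp : 1 ≤ 2 ^ k := Nat.one_le_two_pow
      rw [hBkrec, ih,
        show 2 ^ (k + 1) - 1 = 2 * (2 ^ k - 1) + 1 from by omega,
        show 2 ^ (k + 1) = 2 * 2 ^ k from by ring]
      ring
  refine ⟨h1, h2, ?_⟩
  intro k
  refine ⟨2 ^ k, fun m hm => ?_⟩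
  have hj1 : 1 ≤ 2 ^ k := Nat.one_le_two_pow
  rw [h2 k, show 2 * m + 1 = (2 * m + 2 - 2 ^ k) + (2 ^ k - 1) from by omega,
    coeff_X_pow_mul, stP_coeff B h1]
  have hle : 2 ^ k ≤ 2 * m + 2 - 2 ^ k := by omega
  have hpar : 2 ^ k % 2 = (2 * m + 2 - 2 ^ k) % 2 := by
    cases k with
    | zero => simp only [pow_zero]; omega
    | succ k =>
      obtain ⟨c, hc2⟩ : ∃ c, 2 ^ (k + 1) = 2 * c := ⟨2 ^ k, by ring⟩
      omega
  have hform := stP_formula (2 * m + 2 - 2 ^ k) (2 ^ k) hpar hle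
  rw [show (2 * m + 2 - 2 ^ k - 2 ^ k) / 2 = m + 1 - 2 ^ k from by omega] at hform
  have hN0' : 2 * m + 2 - 2 ^ k ≠ 0 := by omega
  have hN0 : ((2 * m + 2 - 2 ^ k : ℕ) : ℝ) ≠ 0 := Nat.cast_ne_zero.mpr hN0'
  rw [div_mul_eq_mul_div, eq_div_iff hN0]
  push_cast at hform ⊢
  linear_combination hform
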